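/- Let M be a submonoid of the additive monoid ℚ₊ of nonnegative rational numbers and let F be a field. Then the monoid domain F[X;M] is a principal ideal domain if and only if M = {0} or M is isomorphic as an additive monoid to ℕ₀ = {0, 1, 2, …}. -/

import Mathlib

open AddMonoidAlgebra Finsupp

lemma uniqueAdd_of_min' {M : AddSubmonoid ℚ} (s t : Finset M) {a b : M}
    (ha : ∀ x ∈ s, (a : ℚ) ≤ x) (hb : ∀ y ∈ t, (b : ℚ) ≤ y) :
    UniqueAdd s t a b := by
  intro x y hx hy hxy
  have h1 := ha x hx
  have h2 := hb y hy
  have h3 : (x : ℚ) + y = a + b := by exact_mod_cast congrArg Subtype.val hxy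
  exact ⟨Subtype.ext (by linarith), Subtype.ext (by linarith)⟩

lemma uniqueAdd_of_max' {M : AddSubmonoid ℚ} (s t : Finset M) {a b : M}
    (ha : ∀ x ∈ s, (x : ℚ) ≤ a) (hb : ∀ y ∈ t, (y : ℚ) ≤ b) :
    UniqueAdd s t a b := by
  intro x y hx hy hxy
  have h1 := ha x hx
  have h2 := hb y hy
  have h3 : (x : ℚ) + y = a + b := by exact_mod_cast congrArg Subtype.val hxy
  exact ⟨Subtype.ext (by linarith), Subtype.ext (by linarith)⟩

/-- If a product in `F[M]` is a nonzero monomial, both factors are monomials. -/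
lemma single_factor' {M : AddSubmonoid ℚ} {F : Type*} [Field F]
    {p q : AddMonoidAlgebra F M} {a : M} {c : F} (hc : c ≠ 0)
    (h : p * q = AddMonoidAlgebra.single a c) :
    ∃ (ap aq : M) (cp cq : F), cp ≠ 0 ∧ cq ≠ 0 ∧
      p = AddMonoidAlgebra.single ap cp ∧ q = AddMonoidAlgebra.single aq cq ∧ ap + aq = a := by
  have hp : p ≠ 0 := by
    rintro rfl; rw [zero_mul] at h; exact hc (AddMonoidAlgebra.single_eq_zero.1 h.symm)
  have hq : q ≠ 0 := by
    rintro rfl; rw [mul_zero] at h; exact hc (AddMonoidAlgebra.single_eq_zero.1 h.symm)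
  have hps : p.coeff.support.Nonempty := Finsupp.support_nonempty_iff.2 (mt AddMonoidAlgebra.coeff_eq_zero.1 hp)
  have hqs : q.coeff.support.Nonempty := Finsupp.support_nonempty_iff.2 (mt AddMonoidAlgebra.coeff_eq_zero.1 hq)
  set ap := p.coeff.support.min' hps with hap
  set Ap := p.coeff.support.max' hps with hAp
  set aq := q.coeff.support.min' hqs with haq
  set Aq := q.coeff.support.max' hqs with hAq
  have keymin : (p * q).coeff (ap + aq) = p.coeff ap * q.coeff aq :=
    AddMonoidAlgebra.coeff_mul_add_of_uniqueAdd
      (uniqueAdd_of_min' _ _ (fun x hx => by exact_mod_cast p.coeff.support.min'_le x hx)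
        (fun y hy => by exact_mod_cast q.coeff.support.min'_le y hy))
  have keymax : (p * q).coeff (Ap + Aq) = p.coeff Ap * q.coeff Aq :=
    AddMonoidAlgebra.coeff_mul_add_of_uniqueAdd
      (uniqueAdd_of_max' _ _ (fun x hx => by exact_mod_cast p.coeff.support.le_max' x hx)
        (fun y hy => by exact_mod_cast q.coeff.support.le_max' y hy))
  have hpm : p.coeff ap ≠ 0 := Finsupp.mem_support_iff.1 (p.coeff.support.min'_mem hps)
  have hqm : q.coeff aq ≠ 0 := Finsupp.mem_support_iff.1 (q.coeff.support.min'_mem hqs)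
  have hpM : p.coeff Ap ≠ 0 := Finsupp.mem_support_iff.1 (p.coeff.support.max'_mem hps)
  have hqM : q.coeff Aq ≠ 0 := Finsupp.mem_support_iff.1 (q.coeff.support.max'_mem hqs)
  have hmin : ap + aq = a := by
    by_contra hne
    rw [h, AddMonoidAlgebra.coeff_single, Finsupp.single_apply, if_neg (fun hh => hne hh.symm)] at keymin
    exact mul_ne_zero hpm hqm keymin.symm
  have hmax : Ap + Aq = a := by
    by_contra hne
    rw [h, AddMonoidAlgebra.coeff_single, Finsupp.single_apply, if_neg (fun hh => hne hh.symm)] at keymax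
    exact mul_ne_zero hpM hqM keymax.symm
  have hle1 : (ap : ℚ) ≤ Ap := by exact_mod_cast p.coeff.support.min'_le _ (p.coeff.support.max'_mem hps)
  have hle2 : (aq : ℚ) ≤ Aq := by exact_mod_cast q.coeff.support.min'_le _ (q.coeff.support.max'_mem hqs)
  have hsum : (ap : ℚ) + aq = (Ap : ℚ) + Aq := by
    have := hmin.trans hmax.symm
    exact_mod_cast congrArg Subtype.val this
  have heq1 : ap = Ap := Subtype.ext (by linarith)
  have hsupp : p.coeff.support = {ap} := by
    apply Finset.eq_singleton_iff_nonempty_unique_mem.2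
    refine ⟨⟨ap, p.coeff.support.min'_mem hps⟩, fun x hx => ?_⟩
    have l1 : (ap : ℚ) ≤ x := by exact_mod_cast p.coeff.support.min'_le x hx
    have l2 : (x : ℚ) ≤ Ap := by exact_mod_cast p.coeff.support.le_max' x hx
    rw [← heq1] at l2
    exact Subtype.ext (le_antisymm (by exact_mod_cast l2) (by exact_mod_cast l1))
  have heq2 : aq = Aq := Subtype.ext (by linarith)
  have hsuppq : q.coeff.support = {aq} := by
    apply Finset.eq_singleton_iff_nonempty_unique_mem.2
    refine ⟨⟨aq, q.coeff.support.min'_mem hqs⟩, fun x hx => ?_⟩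
    have l1 : (aq : ℚ) ≤ x := by exact_mod_cast q.coeff.support.min'_le x hx
    have l2 : (x : ℚ) ≤ Aq := by exact_mod_cast q.coeff.support.le_max' x hx
    rw [← heq2] at l2
    exact Subtype.ext (le_antisymm (by exact_mod_cast l2) (by exact_mod_cast l1))
  exact ⟨ap, aq, p.coeff ap, q.coeff aq, hpm, hqm,
    AddMonoidAlgebra.coeff_injective (Finsupp.support_eq_singleton.1 hsupp).2,
    AddMonoidAlgebra.coeff_injective (Finsupp.support_eq_singleton.1 hsuppq).2, hmin⟩

/-- The constant-coefficient monoid hom, when all elements of `M` are nonnegative. -/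
noncomputable def augMonoidHom' (M : AddSubmonoid ℚ) (hM : ∀ x ∈ M, (0 : ℚ) ≤ x)
    (F : Type*) [Field F] : Multiplicative M →* F where
  toFun m := if Multiplicative.toAdd m = 0 then 1 else 0
  map_one' := by simp
  map_mul' a b := by
    rcases eq_or_ne (Multiplicative.toAdd a) 0 with ha | ha <;>
      rcases eq_or_ne (Multiplicative.toAdd b) 0 with hb | hb
    · simp [ha, hb]
    · have hab : Multiplicative.toAdd a + Multiplicative.toAdd b ≠ 0 := by
        rw [ha, zero_add]; exact hb
      simp [toAdd_mul, hab, hb]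
    · have hab : Multiplicative.toAdd a + Multiplicative.toAdd b ≠ 0 := by
        rw [hb, add_zero]; exact ha
      simp [toAdd_mul, hab, ha]
    · have hab : Multiplicative.toAdd a + Multiplicative.toAdd b ≠ 0 := by
        intro h
        apply ha
        have h1 := hM _ (Multiplicative.toAdd a).2
        have h2 := hM _ (Multiplicative.toAdd b).2
        have h3 := congrArg Subtype.val h
        push_cast at h3
        apply Subtype.ext
        show ((Multiplicative.toAdd a : M) : ℚ) = ((0 : M) : ℚ)
        simp only [AddSubmonoid.coe_zero] at h3 ⊢
        linarith
      simp [toAdd_mul, hab, ha]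

lemma aug_single' (M : AddSubmonoid ℚ) (hM : ∀ x ∈ M, (0 : ℚ) ≤ x)
    (F : Type*) [Field F] (a : M) (c : F) :
    (AddMonoidAlgebra.lift F F M) (augMonoidHom' M hM F) (AddMonoidAlgebra.single a c)
      = if a = 0 then c else 0 := by
  rw [AddMonoidAlgebra.lift_single]
  simp only [augMonoidHom', MonoidHom.coe_mk, OneHom.coe_mk, toAdd_ofAdd, smul_eq_mul]
  split_ifs <;> simp

lemma exists_nsmul_aux' {M : AddSubmonoid ℚ} (hM : ∀ x ∈ M, (0 : ℚ) ≤ x) {d : M}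
    (hd : d ≠ 0) (hstep : ∀ α : M, α ≠ 0 → ∃ m : M, α = d + m) :
    ∀ α : M, ∃ k : ℕ, (α : ℚ) = k * (d : ℚ) := by
  have hd0 : (0 : ℚ) < (d : ℚ) := by
    rcases (hM _ d.2).lt_or_eq with h | h
    · exact h
    · exact absurd (Subtype.ext h.symm) hd
  have main : ∀ n : ℕ, ∀ α : M, ⌊(α : ℚ) / d⌋₊ = n → ∃ k : ℕ, (α : ℚ) = k * (d : ℚ) := by
    intro n
    induction n using Nat.strong_induction_on with
    | _ n ih =>
      intro α hn
      rcases eq_or_ne α 0 with rfl | hα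
      · exact ⟨0, by simp⟩
      · obtain ⟨m, hm⟩ := hstep α hα
        have hmq : (α : ℚ) = (d : ℚ) + (m : ℚ) := by exact_mod_cast congrArg Subtype.val hm
        have hm0 : (0 : ℚ) ≤ (m : ℚ) := hM _ m.2
        have hdiv : (α : ℚ) / d = (m : ℚ) / d + 1 := by
          field_simp [hmq]; linarith
        have hfloor : ⌊(α : ℚ) / d⌋₊ = ⌊(m : ℚ) / d⌋₊ + 1 := by
          rw [hdiv, Nat.floor_add_one (div_nonneg hm0 hd0.le)]
        obtain ⟨k, hk⟩ := ih ⌊(m : ℚ) / d⌋₊ (by omega) m rfl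
        exact ⟨k + 1, by rw [hmq, hk]; push_cast; ring⟩
  exact fun α => main _ α rfl

theorem monoidAlgebra_pid_iff (M : AddSubmonoid ℚ)
    (hM : ∀ x ∈ M, (0 : ℚ) ≤ x)
    (F : Type*) [Field F] :
    (IsDomain (AddMonoidAlgebra F M) ∧ IsPrincipalIdealRing (AddMonoidAlgebra F M)) ↔
      (M = ⊥ ∨ Nonempty (M ≃+ ℕ)) := by
  constructor
  · rintro ⟨hdom, hpid⟩
    by_cases hbot : M = ⊥
    · exact Or.inl hbot
    right
    rw [AddSubmonoid.eq_bot_iff_forall] at hbot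
    push_neg at hbot
    obtain ⟨x, hxM, hx0⟩ := hbot
    set α₀ : M := ⟨x, hxM⟩ with hα₀def
    have hα₀ : α₀ ≠ 0 := fun h => hx0 (congrArg Subtype.val h)
    set φ := (AddMonoidAlgebra.lift F F M) (augMonoidHom' M hM F) with hφ
    set I : Ideal (AddMonoidAlgebra F M) := RingHom.ker φ with hI
    have hsingle_mem : ∀ α : M, α ≠ 0 → AddMonoidAlgebra.single α (1 : F) ∈ I := by
      intro α hα
      rw [hI, RingHom.mem_ker, hφ, aug_single', if_neg hα]
    obtain ⟨g, hgI⟩ := (IsPrincipalIdealRing.principal I).principal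
    have hgI' : I = Ideal.span {g} := hgI
    -- g divides `single α₀ 1`
    obtain ⟨h, hh⟩ : g ∣ AddMonoidAlgebra.single α₀ (1 : F) :=
      Ideal.mem_span_singleton.1 (hgI' ▸ hsingle_mem α₀ hα₀)
    obtain ⟨dg, mh, cg, ch, hcg, hch, hgdef, -, -⟩ := single_factor' one_ne_zero hh.symm
    have hgker : φ g = 0 := by
      have : g ∈ I := hgI' ▸ Ideal.mem_span_singleton_self g
      rwa [hI, RingHom.mem_ker] at this
    have hdg : dg ≠ 0 := by
      intro h0
      rw [hgdef, hφ, aug_single', if_pos h0] at hgker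
      exact hcg hgker
    have hstep : ∀ α : M, α ≠ 0 → ∃ m : M, α = dg + m := by
      intro α hα
      obtain ⟨h', hh'⟩ : g ∣ AddMonoidAlgebra.single α (1 : F) :=
        Ideal.mem_span_singleton.1 (hgI' ▸ hsingle_mem α hα)
      obtain ⟨ap, aq, cp, cq, hcp, hcq, hp, hq, hsum⟩ := single_factor' one_ne_zero hh'.symm
      have hap : ap = dg := by
        have := hp.symm.trans hgdef
        rcases AddMonoidAlgebra.single_inj.1 this with ⟨h1, -⟩ | ⟨h1, -⟩
        · exact h1
        · exact absurd h1 hcp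
      exact ⟨aq, by rw [← hsum, hap]⟩
    have hmul := exists_nsmul_aux' hM hdg hstep
    have hdq : (dg : ℚ) ≠ 0 := fun h => hdg (ZeroMemClass.coe_eq_zero.mp h)
    have hcoe : ∀ k : ℕ, ((k • dg : M) : ℚ) = k * (dg : ℚ) := by
      intro k
      rw [AddSubmonoidClass.coe_nsmul, nsmul_eq_mul]
    let ψ : ℕ →+ M :=
      { toFun := fun k => k • dg
        map_zero' := zero_nsmul _
        map_add' := fun a b => add_nsmul _ a b }
    have hinj : Function.Injective ψ := by
      intro a b hab
      have h1 : ((a • dg : M) : ℚ) = ((b • dg : M) : ℚ) := congrArg Subtype.val hab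
      rw [hcoe, hcoe] at h1
      exact_mod_cast mul_right_cancel₀ hdq h1
    have hsurj : Function.Surjective ψ := by
      intro α
      obtain ⟨k, hk⟩ := hmul α
      exact ⟨k, Subtype.ext (by rw [show (ψ k : ℚ) = k * (dg : ℚ) from hcoe k]; exact hk.symm)⟩
    exact ⟨(AddEquiv.ofBijective ψ ⟨hinj, hsurj⟩).symm⟩
  · rintro (rfl | e)
    · haveI : Unique (⊥ : AddSubmonoid ℚ) :=
        ⟨⟨⟨0, zero_mem _⟩⟩, fun a => Subtype.ext ((AddSubmonoid.mem_bot).1 a.2)⟩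
      have hsurj : Function.Surjective
          (algebraMap F (AddMonoidAlgebra F (⊥ : AddSubmonoid ℚ))) := by
        intro f
        refine ⟨f.coeff default, ?_⟩
        conv_rhs => rw [← AddMonoidAlgebra.ofCoeff_coeff f, Finsupp.unique_single f.coeff]
        rw [AddMonoidAlgebra.coe_algebraMap]
        simp only [Function.comp_apply, Algebra.algebraMap_self, RingHom.id_apply]
        rw [show (0 : (⊥ : AddSubmonoid ℚ)) = default from Subsingleton.elim _ _]
        rfl
      exact ⟨NoZeroDivisors.to_isDomain _, IsPrincipalIdealRing.of_surjective _ hsurj⟩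
    · obtain ⟨e⟩ := e
      let ρ : Polynomial F ≃+* AddMonoidAlgebra F M :=
        (Polynomial.toFinsuppIso F).trans (AddMonoidAlgebra.domCongr F F e.symm).toRingEquiv
      exact ⟨NoZeroDivisors.to_isDomain _, IsPrincipalIdealRing.of_surjective ρ ρ.surjective⟩
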